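/- Identify ℝ³ with the pure imaginary quaternions. Let a₀,…,a_N be distinct pure imaginary quaternions, λ₀,…,λ_N > 0, and μ > 0. For pure imaginary x not equal to any aᵢ, let ζ(x) = Σᵢ₌₀ᴺ λᵢ²(x − aᵢ)/‖x − aᵢ‖², ρ(μ)(x) = Σᵢ₌₀ᴺ λᵢ²/‖x − aᵢ + μ‖², Ψ(μ)(x) = Σᵢ,ⱼ λᵢ²λⱼ² (x − aᵢ + μ)·conj(x − aⱼ + μ)·(x − aⱼ) / (‖x − aᵢ + μ‖² ‖x − aⱼ + μ‖² ‖x − aⱼ‖²), and Ξ(μ)(x) = Σᵢ,ⱼ μ λᵢ²λⱼ² (aⱼ − aᵢ)·(x − aⱼ) / (‖x − aᵢ + μ‖² ‖x − aⱼ + μ‖² ‖x − aⱼ‖²), where all products are quaternion products and μ denotes the real quaternion μ·1. Then Ψ(μ)(x) = ρ(μ)(x)·ζ(x) + Ξ(μ)(x). -/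

import Mathlib

/-- The JNR function `ζ(x) = Σᵢ λᵢ² (x − aᵢ)/‖x − aᵢ‖²`, quaternion-valued. -/
noncomputable def jnrZeta (N : ℕ) (a : Fin (N + 1) → Quaternion ℝ)
    (lam : Fin (N + 1) → ℝ) (x : Quaternion ℝ) : Quaternion ℝ :=
  ∑ i, ((lam i) ^ 2 / ‖x - a i‖ ^ 2) • (x - a i)

/-- `ρ(μ)(x) = Σᵢ λᵢ²/‖x − aᵢ + μ‖²`. -/
noncomputable def jnrRho (N : ℕ) (a : Fin (N + 1) → Quaternion ℝ)
    (lam : Fin (N + 1) → ℝ) (μ : ℝ) (x : Quaternion ℝ) : ℝ :=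
  ∑ i, (lam i) ^ 2 / ‖x - a i + (μ : Quaternion ℝ)‖ ^ 2

/-- `Ψ(μ)(x) = Σᵢⱼ λᵢ²λⱼ² (x − aᵢ + μ)·conj(x − aⱼ + μ)·(x − aⱼ)
/(‖x − aᵢ + μ‖²‖x − aⱼ + μ‖²‖x − aⱼ‖²)`, with quaternion products. -/
noncomputable def jnrPsi (N : ℕ) (a : Fin (N + 1) → Quaternion ℝ)
    (lam : Fin (N + 1) → ℝ) (μ : ℝ) (x : Quaternion ℝ) : Quaternion ℝ :=
  ∑ i, ∑ j,
    ((lam i) ^ 2 * (lam j) ^ 2 /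
        (‖x - a i + (μ : Quaternion ℝ)‖ ^ 2 * ‖x - a j + (μ : Quaternion ℝ)‖ ^ 2 *
          ‖x - a j‖ ^ 2)) •
      ((x - a i + (μ : Quaternion ℝ)) * star (x - a j + (μ : Quaternion ℝ)) * (x - a j))

/-- `Ξ(μ)(x) = Σᵢⱼ μλᵢ²λⱼ² (aⱼ − aᵢ)·(x − aⱼ)/(‖x − aᵢ + μ‖²‖x − aⱼ + μ‖²‖x − aⱼ‖²)`. -/
noncomputable def jnrXi (N : ℕ) (a : Fin (N + 1) → Quaternion ℝ)
    (lam : Fin (N + 1) → ℝ) (μ : ℝ) (x : Quaternion ℝ) : Quaternion ℝ :=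
  ∑ i, ∑ j,
    (μ * (lam i) ^ 2 * (lam j) ^ 2 /
        (‖x - a i + (μ : Quaternion ℝ)‖ ^ 2 * ‖x - a j + (μ : Quaternion ℝ)‖ ^ 2 *
          ‖x - a j‖ ^ 2)) •
      ((a j - a i) * (x - a j))

lemma quat_key (u w : Quaternion ℝ) (hu : u.re = 0) (hw : w.re = 0) (μ : ℝ) :
    (u + (μ : Quaternion ℝ)) * star (w + (μ : Quaternion ℝ)) * w =
      (μ ^ 2) • w + (Quaternion.normSq w) • u + μ • ((u - w) * w) := by
  ext <;>
  simp [Quaternion.normSq_def', Quaternion.re_mul, Quaternion.imI_mul, Quaternion.imJ_mul,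
    Quaternion.imK_mul, hu, hw] <;>
  ring

/-- For distinct pure imaginary poles `aᵢ`, weights `λᵢ > 0`, `μ > 0`,
and pure imaginary `x` away from the poles: `Ψ(μ)(x) = ρ(μ)(x)·ζ(x) + Ξ(μ)(x)`. -/
theorem jnr_Psi_eq_rho_zeta_add_Xi (N : ℕ)
    (a : Fin (N + 1) → Quaternion ℝ) (ha_im : ∀ i, (a i).re = 0)
    (ha : Function.Injective a)
    (lam : Fin (N + 1) → ℝ) (hlam : ∀ i, 0 < lam i)
    (μ : ℝ) (hμ : 0 < μ)
    (x : Quaternion ℝ) (hx_im : x.re = 0) (hx : ∀ i, x ≠ a i) :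
    jnrPsi N a lam μ x = jnrRho N a lam μ x • jnrZeta N a lam x + jnrXi N a lam μ x := by
  classical
  have hnormsq : ∀ q : Quaternion ℝ, ‖q‖ ^ 2 = Quaternion.normSq q := fun q => by
    rw [Quaternion.normSq_eq_norm_mul_self, sq]
  have hre : ∀ i, (x - a i).re = 0 := fun i => by
    simp [Quaternion.re_sub, hx_im, ha_im]
  have hVpos : ∀ i, (0:ℝ) < ‖x - a i‖ ^ 2 := fun i =>
    pow_pos (norm_pos_iff.mpr (sub_ne_zero.mpr (hx i))) 2
  have hDeq : ∀ i, ‖x - a i + (μ : Quaternion ℝ)‖ ^ 2 = ‖x - a i‖ ^ 2 + μ ^ 2 := by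
    intro i
    rw [hnormsq, hnormsq]
    simp [Quaternion.normSq_def', Quaternion.re_add, Quaternion.re_sub, hx_im, ha_im]
    ring
  have hDpos : ∀ i, (0:ℝ) < ‖x - a i + (μ : Quaternion ℝ)‖ ^ 2 := fun i => by
    rw [hDeq i]; positivity
  -- abbreviations
  set D : Fin (N+1) → ℝ := fun i => ‖x - a i + (μ : Quaternion ℝ)‖ ^ 2 with hDdef
  set V : Fin (N+1) → ℝ := fun i => ‖x - a i‖ ^ 2 with hVdef
  have hRZ : jnrRho N a lam μ x • jnrZeta N a lam x =
      ∑ i, ∑ j, ((lam i ^ 2 / D i) * (lam j ^ 2 / V j)) • (x - a j) := by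
    rw [jnrRho, jnrZeta, Finset.sum_smul]
    refine Finset.sum_congr rfl fun i _ => ?_
    rw [Finset.smul_sum]
    exact Finset.sum_congr rfl fun j _ => (smul_smul _ _ _)
  have hPsi : jnrPsi N a lam μ x =
      (∑ i, ∑ j, (lam i ^ 2 * lam j ^ 2 * μ ^ 2 / (D i * D j * V j)) • (x - a j)) +
      (∑ i, ∑ j, (lam i ^ 2 * lam j ^ 2 / (D i * D j)) • (x - a i)) +
      jnrXi N a lam μ x := by
    rw [jnrPsi, jnrXi, ← Finset.sum_add_distrib, ← Finset.sum_add_distrib]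
    refine Finset.sum_congr rfl fun i _ => ?_
    rw [← Finset.sum_add_distrib, ← Finset.sum_add_distrib]
    refine Finset.sum_congr rfl fun j _ => ?_
    rw [quat_key (x - a i) (x - a j) (hre i) (hre j) μ, smul_add, smul_add,
      smul_smul, smul_smul, smul_smul]
    have hdiff : x - a i - (x - a j) = a j - a i := by abel
    rw [hdiff, ← hnormsq]
    have h1 : D i ≠ 0 := (hDpos i).ne'
    have h2 : D j ≠ 0 := (hDpos j).ne'
    have h3 : V j ≠ 0 := (hVpos j).ne'
    have h1' : ‖x - a i + (μ : Quaternion ℝ)‖ ≠ 0 := fun h => by simp [hDdef, h] at h1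
    have h2' : ‖x - a j + (μ : Quaternion ℝ)‖ ≠ 0 := fun h => by simp [hDdef, h] at h2
    have h3' : ‖x - a j‖ ≠ 0 := fun h => by simp [hVdef, h] at h3
    congr 1
    · congr 1
      · congr 1
        field_simp
        try ring
      · congr 1
        field_simp
        try ring
    · congr 1
      field_simp
      try ring
  rw [hPsi, hRZ]
  congr 1
  rw [Finset.sum_comm (f := fun i j => (lam i ^ 2 * lam j ^ 2 / (D i * D j)) • (x - a i))]
  rw [← Finset.sum_add_distrib]
  refine Finset.sum_congr rfl fun i _ => ?_
  rw [← Finset.sum_add_distrib]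
  refine Finset.sum_congr rfl fun j _ => ?_
  rw [← add_smul]
  congr 1
  have h1 : D i ≠ 0 := (hDpos i).ne'
  have h2 : D j ≠ 0 := (hDpos j).ne'
  have h3 : V j ≠ 0 := (hVpos j).ne'
  have h4 : D j = V j + μ ^ 2 := hDeq j
  field_simp
  rw [h4]
  ring
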